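/- For 0 < ρ < ⌊n/2⌋, K_S(q,n,2ρ) ≤ K_I(q,n,ρ) ≤ K_S(q,n,ρ), and K_I(q,n,ρ) ≤ 2 + ∑_{r=ρ+1}^{n-ρ-1} K_C(q,n,r,ρ), where the last bound is realized by adjoining {0} and GF(q)^n to a union over r of minimum-size covering CDCs of covering radius ρ in each Grassmannian E_r(q,n). -/

import Mathlib

open Module

/-- The subspace distance `d_S(U,V) = dim(U+V) - dim(U∩V)`. -/
noncomputable def dS {F : Type} [Field F] {n : ℕ} (U V : Submodule F (Fin n → F)) : ℕ :=
  Module.finrank F ↥(U ⊔ V) - Module.finrank F ↥(U ⊓ V)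

/-- The injection distance `d_I(U,V) = max{dim U, dim V} - dim(U∩V)`. -/
noncomputable def dI {F : Type} [Field F] {n : ℕ} (U V : Submodule F (Fin n → F)) : ℕ :=
  max (Module.finrank F ↥U) (Module.finrank F ↥V) - Module.finrank F ↥(U ⊓ V)

/-- Minimum cardinality of a subspace code in `E(q,n)` with subspace covering radius `ρ`. -/
noncomputable def KS (F : Type) [Field F] [Fintype F] (n ρ : ℕ) : ℕ :=
  sInf {m : ℕ | ∃ C : Set (Submodule F (Fin n → F)),
    m = C.ncard ∧ ∀ U : Submodule F (Fin n → F), ∃ V ∈ C, dS U V ≤ ρ}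

/-- Minimum cardinality of a subspace code in `E(q,n)` with injection covering radius `ρ`. -/
noncomputable def KI (F : Type) [Field F] [Fintype F] (n ρ : ℕ) : ℕ :=
  sInf {m : ℕ | ∃ C : Set (Submodule F (Fin n → F)),
    m = C.ncard ∧ ∀ U : Submodule F (Fin n → F), ∃ V ∈ C, dI U V ≤ ρ}

/-- Minimum cardinality of a CDC in `E_r(q,n)` with injection covering radius `ρ` in
`E_r(q,n)`. -/
noncomputable def KC (F : Type) [Field F] [Fintype F] (n r ρ : ℕ) : ℕ :=
  sInf {m : ℕ | ∃ C : Set (Submodule F (Fin n → F)),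
    m = C.ncard ∧ (∀ U ∈ C, finrank F ↥U = r) ∧
      ∀ U : Submodule F (Fin n → F), finrank F ↥U = r → ∃ V ∈ C, dI U V ≤ ρ}


section AuxKI
variable {F : Type} [Field F] {n : ℕ}

lemma aux_dI_dS (U V : Submodule F (Fin n → F)) :
    dI U V ≤ dS U V ∧ dS U V ≤ 2 * dI U V := by
  have h1 := Submodule.finrank_sup_add_finrank_inf_eq U V
  have h2 : finrank F ↥(U ⊓ V) ≤ finrank F ↥U := Submodule.finrank_mono inf_le_left
  have h3 : finrank F ↥(U ⊓ V) ≤ finrank F ↥V := Submodule.finrank_mono inf_le_right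
  unfold dI dS
  rcases le_total (finrank F ↥U) (finrank F ↥V) with h | h <;>
    [rw [max_eq_right h]; rw [max_eq_left h]] <;> omega

lemma aux_dI_self (U : Submodule F (Fin n → F)) : dI U U = 0 := by
  rw [dI, inf_idem]; omega

lemma aux_dI_bot (U : Submodule F (Fin n → F)) : dI U ⊥ = finrank F ↥U := by
  rw [dI, inf_bot_eq]; simp [finrank_bot]

lemma aux_dI_top (U : Submodule F (Fin n → F)) : dI U ⊤ = n - finrank F ↥U := by
  have h : finrank F ↥U ≤ n := by simpa using U.finrank_le
  rw [dI, inf_top_eq]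
  simp [finrank_top, Module.finrank_fin_fun, Nat.max_eq_right h]

lemma aux_ncard_biUnion {α β : Type} [Finite β] (s : Finset α) (C : α → Set β) :
    (⋃ r ∈ s, C r).ncard ≤ ∑ r ∈ s, (C r).ncard := by
  classical
  induction s using Finset.induction with
  | empty => simp
  | insert _ _ hx ih =>
    rename_i a s
    rw [Finset.sum_insert hx]
    refine le_trans (le_of_eq (by rw [Finset.set_biUnion_insert])) ?_
    exact le_trans (Set.ncard_union_le _ _) (by omega)
end AuxKI

theorem KI_relations (F : Type) [Field F] [Fintype F] (n ρ : ℕ)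
    (h1 : 0 < ρ) (h2 : ρ < n / 2) :
    (KS F n (2 * ρ) ≤ KI F n ρ) ∧
    (KI F n ρ ≤ KS F n ρ) ∧
    (KI F n ρ ≤ 2 + ∑ r ∈ Finset.Icc (ρ + 1) (n - ρ - 1), KC F n r ρ) ∧
    (∀ C : ℕ → Set (Submodule F (Fin n → F)),
      (∀ r ∈ Finset.Icc (ρ + 1) (n - ρ - 1),
        (∀ U ∈ C r, finrank F ↥U = r) ∧
        (∀ U : Submodule F (Fin n → F), finrank F ↥U = r → ∃ V ∈ C r, dI U V ≤ ρ)) →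
      ∀ U : Submodule F (Fin n → F),
        ∃ V ∈ (({⊥, ⊤} : Set (Submodule F (Fin n → F))) ∪
          ⋃ r ∈ Finset.Icc (ρ + 1) (n - ρ - 1), C r), dI U V ≤ ρ) := by
  classical
  have cover : ∀ C : ℕ → Set (Submodule F (Fin n → F)),
      (∀ r ∈ Finset.Icc (ρ + 1) (n - ρ - 1),
        (∀ U ∈ C r, finrank F ↥U = r) ∧
        (∀ U : Submodule F (Fin n → F), finrank F ↥U = r → ∃ V ∈ C r, dI U V ≤ ρ)) →
      ∀ U : Submodule F (Fin n → F),
        ∃ V ∈ (({⊥, ⊤} : Set (Submodule F (Fin n → F))) ∪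
          ⋃ r ∈ Finset.Icc (ρ + 1) (n - ρ - 1), C r), dI U V ≤ ρ := by
    intro C hC U
    have hUn : finrank F ↥U ≤ n := by simpa using U.finrank_le
    by_cases hsmall : finrank F ↥U ≤ ρ
    · exact ⟨⊥, Set.mem_union_left _ (Set.mem_insert _ _),
        by rw [aux_dI_bot]; exact hsmall⟩
    by_cases hbig : n - ρ ≤ finrank F ↥U
    · exact ⟨⊤, Set.mem_union_left _ (Set.mem_insert_of_mem _ rfl),
        by rw [aux_dI_top]; omega⟩
    · have hmem : finrank F ↥U ∈ Finset.Icc (ρ + 1) (n - ρ - 1) := by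
        rw [Finset.mem_Icc]; omega
      obtain ⟨V, hV, hle⟩ := (hC _ hmem).2 U rfl
      exact ⟨V, Set.mem_union_right _ (Set.mem_iUnion₂.mpr ⟨_, hmem, hV⟩), hle⟩
  refine ⟨?_, ?_, ?_, cover⟩
  · -- KS (2ρ) ≤ KI ρ
    have hne : {m : ℕ | ∃ C : Set (Submodule F (Fin n → F)),
        m = C.ncard ∧ ∀ U : Submodule F (Fin n → F), ∃ V ∈ C, dI U V ≤ ρ}.Nonempty :=
      ⟨(Set.univ : Set (Submodule F (Fin n → F))).ncard, Set.univ, rfl,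
        fun U => ⟨U, Set.mem_univ U, by rw [aux_dI_self]; omega⟩⟩
    obtain ⟨C, hCcard, hCcov⟩ := Nat.sInf_mem hne
    refine Nat.sInf_le ⟨C, hCcard, fun U => ?_⟩
    obtain ⟨V, hV, hle⟩ := hCcov U
    exact ⟨V, hV, le_trans (aux_dI_dS U V).2 (by omega)⟩
  · -- KI ρ ≤ KS ρ
    have hne : {m : ℕ | ∃ C : Set (Submodule F (Fin n → F)),
        m = C.ncard ∧ ∀ U : Submodule F (Fin n → F), ∃ V ∈ C, dS U V ≤ ρ}.Nonempty := by
      refine ⟨(Set.univ : Set (Submodule F (Fin n → F))).ncard, Set.univ, rfl,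
        fun U => ⟨U, Set.mem_univ U, ?_⟩⟩
      rw [dS, sup_idem, inf_idem]; omega
    obtain ⟨C, hCcard, hCcov⟩ := Nat.sInf_mem hne
    refine Nat.sInf_le ⟨C, hCcard, fun U => ?_⟩
    obtain ⟨V, hV, hle⟩ := hCcov U
    exact ⟨V, hV, le_trans (aux_dI_dS U V).1 hle⟩
  · -- KI ρ ≤ 2 + ∑ KC
    have hKC : ∀ r : ℕ, ∃ C : Set (Submodule F (Fin n → F)),
        KC F n r ρ = C.ncard ∧ (∀ U ∈ C, finrank F ↥U = r) ∧
        ∀ U : Submodule F (Fin n → F), finrank F ↥U = r → ∃ V ∈ C, dI U V ≤ ρ := by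
      intro r
      have hne : {m : ℕ | ∃ C : Set (Submodule F (Fin n → F)),
          m = C.ncard ∧ (∀ U ∈ C, finrank F ↥U = r) ∧
          ∀ U : Submodule F (Fin n → F), finrank F ↥U = r → ∃ V ∈ C, dI U V ≤ ρ}.Nonempty :=
        ⟨_, {W : Submodule F (Fin n → F) | finrank F ↥W = r}, rfl,
          fun U hU => hU, fun U hU => ⟨U, hU, by rw [aux_dI_self]; omega⟩⟩
      exact Nat.sInf_mem hne
    choose Cr hcard hdim hcov using hKC
    have hDcov : ∀ U : Submodule F (Fin n → F),
        ∃ V ∈ (({⊥, ⊤} : Set (Submodule F (Fin n → F))) ∪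
          ⋃ r ∈ Finset.Icc (ρ + 1) (n - ρ - 1), Cr r), dI U V ≤ ρ :=
      cover Cr (fun r _ => ⟨hdim r, hcov r⟩)
    have h1' : KI F n ρ ≤
        ((({⊥, ⊤} : Set (Submodule F (Fin n → F))) ∪
          ⋃ r ∈ Finset.Icc (ρ + 1) (n - ρ - 1), Cr r)).ncard :=
      Nat.sInf_le ⟨_, rfl, hDcov⟩
    refine h1'.trans (le_trans (Set.ncard_union_le _ _) ?_)
    have hpair : ({⊥, ⊤} : Set (Submodule F (Fin n → F))).ncard ≤ 2 :=
      (Set.ncard_insert_le _ _).trans (by simp)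
    have hsum := aux_ncard_biUnion (Finset.Icc (ρ + 1) (n - ρ - 1)) Cr
    have hsum' : ∑ r ∈ Finset.Icc (ρ + 1) (n - ρ - 1), (Cr r).ncard
        = ∑ r ∈ Finset.Icc (ρ + 1) (n - ρ - 1), KC F n r ρ :=
      Finset.sum_congr rfl fun r _ => (hcard r).symm
    omega
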